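/- Let $K \subset \mathbb{R}^2$ be a compact convex body whose support function $h(\vartheta) = \sup_{y \in K} \langle (\cos\vartheta, \sin\vartheta), y \rangle$ is twice continuously differentiable with $h(\vartheta) + h''(\vartheta) > 0$ for all $\vartheta$. Fix $\vartheta_0 \in \mathbb{R}$ and let $i(\vartheta) = h(\vartheta) n_\vartheta - \big(\int_{\vartheta_0}^{\vartheta} h(\tau)\,d\tau - h'(\vartheta_0)\big) t_\vartheta$ be the left involute of $\partial K$ starting at $i(\vartheta_0)$. Let $y \in \partial K$. Then $\vartheta \mapsto \|i(\vartheta) - y\|$ is nondecreasing on $[\vartheta_0, \infty)$, and for every $\vartheta > \vartheta_0$ with $\langle n_\vartheta, y \rangle < h(\vartheta)$ (i.e. $n_\vartheta$ not in the normal cone of $K$ at $y$) one has $\frac{d}{d\vartheta}\|i(\vartheta) - y\|^2 > 0$. -/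

import Mathlib

open Real MeasureTheory

noncomputable def vec2 (a b : ℝ) : EuclideanSpace ℝ (Fin 2) :=
  (WithLp.equiv 2 (Fin 2 → ℝ)).symm ![a, b]

/-- The outer normal direction `n_ϑ = (cos ϑ, sin ϑ)`. -/
noncomputable def nvec (θ : ℝ) : EuclideanSpace ℝ (Fin 2) := vec2 (Real.cos θ) (Real.sin θ)

/-- The tangent direction `t_ϑ = (-sin ϑ, cos ϑ)`. -/
noncomputable def tvec (θ : ℝ) : EuclideanSpace ℝ (Fin 2) := vec2 (-Real.sin θ) (Real.cos θ)

lemma inner_vec2 (a b c d : ℝ) : (inner ℝ (vec2 a b) (vec2 c d) : ℝ) = a*c + b*d := by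
  simp [vec2, PiLp.inner_apply, Fin.sum_univ_two]; ring

lemma vec2_neg (a b : ℝ) : vec2 (-a) (-b) = -(vec2 a b) := by
  ext j; fin_cases j <;> simp [vec2]

lemma hasDerivAt_vec2 {f g : ℝ → ℝ} {f' g' : ℝ} {t : ℝ}
    (hf : HasDerivAt f f' t) (hg : HasDerivAt g g' t) :
    HasDerivAt (fun s => vec2 (f s) (g s)) (vec2 f' g') t := by
  have H : HasDerivAt (fun s => (![f s, g s] : Fin 2 → ℝ)) ![f', g'] t := by
    rw [hasDerivAt_pi]; intro j; fin_cases j <;> simpa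
  exact ((EuclideanSpace.equiv (Fin 2) ℝ).symm.toContinuousLinearMap.hasFDerivAt.comp_hasDerivAt t H : _)

lemma hasDerivAt_nvec (θ : ℝ) : HasDerivAt nvec (tvec θ) θ :=
  hasDerivAt_vec2 (Real.hasDerivAt_cos θ) (Real.hasDerivAt_sin θ)

lemma hasDerivAt_tvec (θ : ℝ) : HasDerivAt tvec (-nvec θ) θ := by
  have := hasDerivAt_vec2 ((Real.hasDerivAt_sin θ).neg) (Real.hasDerivAt_cos θ)
  rw [show vec2 (-Real.cos θ) (-Real.sin θ) = -nvec θ from vec2_neg _ _] at this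
  exact this

lemma inner_nvec_nvec (θ : ℝ) : (inner ℝ (nvec θ) (nvec θ) : ℝ) = 1 := by
  rw [nvec, inner_vec2]; nlinarith [Real.sin_sq_add_cos_sq θ]

lemma inner_nvec_tvec (θ : ℝ) : (inner ℝ (nvec θ) (tvec θ) : ℝ) = 0 := by
  rw [nvec, tvec, inner_vec2]; ring

/-- For every `y ∈ ∂K`, the distance `ϑ ↦ ‖i(ϑ) - y‖` from `y` to the
left involute is nondecreasing on `[ϑ₀, ∞)`, and for every `ϑ > ϑ₀` with
`⟪n_ϑ, y⟫ < h(ϑ)` (i.e. `n_ϑ` not in the normal cone of `K` at `y`) the derivative of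
`‖i(ϑ) - y‖²` is strictly positive. -/
theorem stmt_11 (K : Set (EuclideanSpace ℝ (Fin 2)))
    (hne : K.Nonempty) (hcp : IsCompact K) (hcv : Convex ℝ K)
    (h : ℝ → ℝ)
    (hsupp : ∀ θ : ℝ, IsLUB ((fun y => (inner ℝ (nvec θ) y : ℝ)) '' K) (h θ))
    (hsm : ContDiff ℝ 2 h) (hpos : ∀ θ, 0 < h θ + deriv (deriv h) θ)
    (θ₀ : ℝ) (i : ℝ → EuclideanSpace ℝ (Fin 2))
    (hi : ∀ θ, i θ = h θ • nvec θ - ((∫ τ in θ₀..θ, h τ) - deriv h θ₀) • tvec θ) :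
    ∀ y ∈ frontier K,
      MonotoneOn (fun θ => ‖i θ - y‖) (Set.Ici θ₀) ∧
      (∀ θ, θ₀ < θ → (inner ℝ (nvec θ) y : ℝ) < h θ →
        0 < deriv (fun ϑ => ‖i ϑ - y‖ ^ 2) θ) := by
  intro y hy
  have hyK : y ∈ K := hcp.isClosed.frontier_subset hy
  have hcont : Continuous h := hsm.continuous
  have hd1 : ContDiff ℝ 1 (deriv h) :=
    (contDiff_succ_iff_deriv.mp (show ContDiff ℝ (1+1) h by exact_mod_cast hsm)).2.2
  have hdh : ∀ θ, HasDerivAt h (deriv h θ) θ :=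
    fun θ => ((contDiff_succ_iff_deriv.mp
      (show ContDiff ℝ (1+1) h by exact_mod_cast hsm)).1 θ).hasDerivAt
  have hdh2 : ∀ θ, HasDerivAt (deriv h) (deriv (deriv h) θ) θ :=
    fun θ => ((hd1.differentiable one_ne_zero) θ).hasDerivAt
  set a : ℝ → ℝ := fun θ => (∫ τ in θ₀..θ, h τ) - deriv h θ₀ with ha
  set g : ℝ → ℝ := fun θ => deriv h θ + a θ with hgdef
  have hda : ∀ θ, HasDerivAt a (h θ) θ := by
    intro θ
    have := (intervalIntegral.integral_hasDerivAt_right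
      (hcont.intervalIntegrable θ₀ θ)
      (hcont.stronglyMeasurableAtFilter _ _) hcont.continuousAt)
    simpa [ha] using this.sub_const (deriv h θ₀)
  have hdg : ∀ θ, HasDerivAt g (deriv (deriv h) θ + h θ) θ :=
    fun θ => (hdh2 θ).add (hda θ)
  have hgmono : StrictMono g := by
    apply strictMono_of_deriv_pos
    intro θ
    rw [(hdg θ).deriv]
    linarith [hpos θ]
  have hg0 : g θ₀ = 0 := by simp [hgdef, ha, intervalIntegral.integral_same]
  have hgnn : ∀ θ, θ₀ ≤ θ → 0 ≤ g θ := fun θ hθ => hg0 ▸ hgmono.monotone hθ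
  have hgpos : ∀ θ, θ₀ < θ → 0 < g θ := fun θ hθ => hg0 ▸ hgmono hθ
  have hhy : ∀ θ, (inner ℝ (nvec θ) y : ℝ) ≤ h θ := fun θ => (hsupp θ).1 ⟨y, hyK, rfl⟩
  have hdi : ∀ θ, HasDerivAt i (g θ • nvec θ) θ := by
    intro θ
    have H : HasDerivAt (fun ϑ => h ϑ • nvec ϑ - a ϑ • tvec ϑ)
        ((h θ • tvec θ + deriv h θ • nvec θ) - (a θ • (-nvec θ) + h θ • tvec θ)) θ :=
      ((hdh θ).smul (hasDerivAt_nvec θ)).sub ((hda θ).smul (hasDerivAt_tvec θ))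
    have : (fun ϑ => h ϑ • nvec ϑ - a ϑ • tvec ϑ) = i := by
      funext ϑ; rw [hi ϑ]
    rw [this] at H
    convert H using 1
    simp only [hgdef]
    module
  have hinner : ∀ θ, (inner ℝ (nvec θ) (i θ - y) : ℝ) = h θ - inner ℝ (nvec θ) y := by
    intro θ
    rw [inner_sub_right, hi θ, inner_sub_right, real_inner_smul_right, real_inner_smul_right,
      inner_nvec_nvec, inner_nvec_tvec]
    ring
  have hdf : ∀ θ, HasDerivAt (fun ϑ => ‖i ϑ - y‖ ^ 2)
      (2 * (g θ * (h θ - inner ℝ (nvec θ) y))) θ := by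
    intro θ
    have H := HasDerivAt.inner ℝ ((hdi θ).sub_const y) ((hdi θ).sub_const y)
    have heq : (fun ϑ => (inner ℝ (i ϑ - y) (i ϑ - y) : ℝ)) = fun ϑ => ‖i ϑ - y‖ ^ 2 := by
      funext ϑ; rw [real_inner_self_eq_norm_sq]
    rw [heq] at H
    refine H.congr_deriv ?_
    have h2 : (inner ℝ (i θ - y) (nvec θ) : ℝ) = h θ - inner ℝ (nvec θ) y := by
      rw [real_inner_comm]; exact hinner θ
    rw [real_inner_smul_right, real_inner_smul_left, h2, hinner θ]
    ring
  constructor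
  · have hfm : MonotoneOn (fun ϑ => ‖i ϑ - y‖ ^ 2) (Set.Ici θ₀) := by
      apply monotoneOn_of_deriv_nonneg (convex_Ici θ₀)
      · exact fun θ _ => ((hdf θ).differentiableAt.continuousAt).continuousWithinAt
      · exact fun θ _ => (hdf θ).differentiableAt.differentiableWithinAt
      · intro θ hθ
        rw [interior_Ici] at hθ
        rw [(hdf θ).deriv]
        nlinarith [hgnn θ hθ.le, hhy θ]
    intro p hp q hq hpq
    have := hfm hp hq hpq
    exact (pow_le_pow_iff_left₀ (norm_nonneg _) (norm_nonneg _) two_ne_zero).mp this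
  · intro θ hθ hlt
    rw [(hdf θ).deriv]
    have h1 := hgpos θ hθ
    nlinarith
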